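/- The Hamiltonian H = J1^2 + J2^2 + 2J3^2 - 2c1 x2 + 2a1 J3 + 2c2 (J3 x1 - x3 J1) Poisson-commutes with the quartic function I4 = c2^2 x1 (x1(J2^2+J3^2-J1^2) - 2(x3 J3 + x2 J2)J1) + c1^2 (x2^2+x3^2) + 2c2 (c1 x1 (x3 J2 - x2 J3) + (J3+a1)(x1(J2^2+J3^2) - (x2 J2 + x3 J3)J1)) - 2c1 (x2(J2^2+J3^2+a1 J3) + (x1 J1 - a1 x3)J2) + (J1^2+J2^2+J3^2)(J3+a1)^2 with respect to the e(3) Lie-Poisson bracket, i.e. {H, I4} = 0. -/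
import Mathlib


open MvPolynomial

noncomputable section

/-- The totally antisymmetric Levi-Civita symbol on three indices. -/
def eps (i j k : Fin 3) : ℝ :=
  if (i = 0 ∧ j = 1 ∧ k = 2) ∨ (i = 1 ∧ j = 2 ∧ k = 0) ∨ (i = 2 ∧ j = 0 ∧ k = 1) then 1
  else if (i = 0 ∧ j = 2 ∧ k = 1) ∨ (i = 2 ∧ j = 1 ∧ k = 0) ∨ (i = 1 ∧ j = 0 ∧ k = 2) then -1
  else 0

/-- The coordinate `J_i` on `ℝ^6 = {(J₁,J₂,J₃,x₁,x₂,x₃)}` as a polynomial. -/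
def Jv (i : Fin 3) : MvPolynomial (Fin 6) ℝ := X (Fin.castAdd 3 i)

/-- The coordinate `x_i` on `ℝ^6` as a polynomial. -/
def xv (i : Fin 3) : MvPolynomial (Fin 6) ℝ := X (Fin.natAdd 3 i)

/-- The `e(3)` Lie–Poisson bracket on polynomial functions on `ℝ^6`:
`{f,g} = Σ_{i,j,k} ε_{ijk} (J_k ∂f/∂J_i ∂g/∂J_j + x_k ∂f/∂J_i ∂g/∂x_j + x_k ∂f/∂x_i ∂g/∂J_j)`. -/
def e3Bracket (f g : MvPolynomial (Fin 6) ℝ) : MvPolynomial (Fin 6) ℝ :=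
  ∑ i : Fin 3, ∑ j : Fin 3, ∑ k : Fin 3, C (eps i j k) *
    (Jv k * pderiv (Fin.castAdd 3 i) f * pderiv (Fin.castAdd 3 j) g
     + xv k * pderiv (Fin.castAdd 3 i) f * pderiv (Fin.natAdd 3 j) g
     + xv k * pderiv (Fin.natAdd 3 i) f * pderiv (Fin.castAdd 3 j) g)


lemma pd_two (j : Fin 6) : pderiv j (2 : MvPolynomial (Fin 6) ℝ) = 0 := by
  rw [show (2 : MvPolynomial (Fin 6) ℝ) = C 2 from (map_ofNat C 2).symm, pderiv_C]

lemma ca0 : (Fin.castAdd 3 (0:Fin 3)) = (0:Fin 6) := rfl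
lemma ca1 : (Fin.castAdd 3 (1:Fin 3)) = (1:Fin 6) := rfl
lemma ca2 : (Fin.castAdd 3 (2:Fin 3)) = (2:Fin 6) := rfl
lemma na0 : (Fin.natAdd 3 (0:Fin 3)) = (3:Fin 6) := rfl
lemma na1 : (Fin.natAdd 3 (1:Fin 3)) = (4:Fin 6) := rfl
lemma na2 : (Fin.natAdd 3 (2:Fin 3)) = (5:Fin 6) := rfl

variable {a1 c1 c2 : ℝ}

def Hpoly (a1 c1 c2 : ℝ) : MvPolynomial (Fin 6) ℝ :=
  Jv 0 ^ 2 + Jv 1 ^ 2 + 2 * Jv 2 ^ 2 - 2 * C c1 * xv 1 + 2 * C a1 * Jv 2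
        + 2 * C c2 * (Jv 2 * xv 0 - xv 2 * Jv 0)

def Ipoly (a1 c1 c2 : ℝ) : MvPolynomial (Fin 6) ℝ :=
  C c2 ^ 2 * xv 0 * (xv 0 * (Jv 1 ^ 2 + Jv 2 ^ 2 - Jv 0 ^ 2)
          - 2 * (xv 2 * Jv 2 + xv 1 * Jv 1) * Jv 0)
        + C c1 ^ 2 * (xv 1 ^ 2 + xv 2 ^ 2)
        + 2 * C c2 * (C c1 * xv 0 * (xv 2 * Jv 1 - xv 1 * Jv 2)
          + (Jv 2 + C a1) * (xv 0 * (Jv 1 ^ 2 + Jv 2 ^ 2)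
            - (xv 1 * Jv 1 + xv 2 * Jv 2) * Jv 0))
        - 2 * C c1 * (xv 1 * (Jv 1 ^ 2 + Jv 2 ^ 2 + C a1 * Jv 2)
          + (xv 0 * Jv 0 - C a1 * xv 2) * Jv 1)
        + (Jv 0 ^ 2 + Jv 1 ^ 2 + Jv 2 ^ 2) * (Jv 2 + C a1) ^ 2

lemma pdH0 : pderiv (0 : Fin 6) (Hpoly a1 c1 c2) = -2 * X 5 * C c2 + 2 * X 0 := by
  unfold Hpoly Jv xv
  simp only [ca0, ca1, ca2, na0, na1, na2, map_add, map_sub, Derivation.leibniz, Derivation.leibniz_pow, pderiv_C, pderiv_X, pd_two, Pi.single_apply, smul_eq_mul, Fin.isValue, Fin.reduceEq, ite_true, ite_false, if_true, if_false, reduceIte, map_zero, mul_zero, zero_mul, add_zero, zero_add, sub_zero, mul_one, one_mul]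
  norm_num
  try ring

lemma pdH1 : pderiv (1 : Fin 6) (Hpoly a1 c1 c2) = 2 * X 1 := by
  unfold Hpoly Jv xv
  simp only [ca0, ca1, ca2, na0, na1, na2, map_add, map_sub, Derivation.leibniz, Derivation.leibniz_pow, pderiv_C, pderiv_X, pd_two, Pi.single_apply, smul_eq_mul, Fin.isValue, Fin.reduceEq, ite_true, ite_false, if_true, if_false, reduceIte, map_zero, mul_zero, zero_mul, add_zero, zero_add, sub_zero, mul_one, one_mul]
  norm_num
  try ring

lemma pdH2 : pderiv (2 : Fin 6) (Hpoly a1 c1 c2) = 2 * C a1 + 2 * X 3 * C c2 + 4 * X 2 := by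
  unfold Hpoly Jv xv
  simp only [ca0, ca1, ca2, na0, na1, na2, map_add, map_sub, Derivation.leibniz, Derivation.leibniz_pow, pderiv_C, pderiv_X, pd_two, Pi.single_apply, smul_eq_mul, Fin.isValue, Fin.reduceEq, ite_true, ite_false, if_true, if_false, reduceIte, map_zero, mul_zero, zero_mul, add_zero, zero_add, sub_zero, mul_one, one_mul]
  norm_num
  try ring

lemma pdH3 : pderiv (3 : Fin 6) (Hpoly a1 c1 c2) = 2 * X 2 * C c2 := by
  unfold Hpoly Jv xv
  simp only [ca0, ca1, ca2, na0, na1, na2, map_add, map_sub, Derivation.leibniz, Derivation.leibniz_pow, pderiv_C, pderiv_X, pd_two, Pi.single_apply, smul_eq_mul, Fin.isValue, Fin.reduceEq, ite_true, ite_false, if_true, if_false, reduceIte, map_zero, mul_zero, zero_mul, add_zero, zero_add, sub_zero, mul_one, one_mul]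
  norm_num
  try ring

lemma pdH4 : pderiv (4 : Fin 6) (Hpoly a1 c1 c2) = -2 * C c1 := by
  unfold Hpoly Jv xv
  simp only [ca0, ca1, ca2, na0, na1, na2, map_add, map_sub, Derivation.leibniz, Derivation.leibniz_pow, pderiv_C, pderiv_X, pd_two, Pi.single_apply, smul_eq_mul, Fin.isValue, Fin.reduceEq, ite_true, ite_false, if_true, if_false, reduceIte, map_zero, mul_zero, zero_mul, add_zero, zero_add, sub_zero, mul_one, one_mul]
  norm_num
  try ring

lemma pdH5 : pderiv (5 : Fin 6) (Hpoly a1 c1 c2) = -2 * X 0 * C c2 := by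
  unfold Hpoly Jv xv
  simp only [ca0, ca1, ca2, na0, na1, na2, map_add, map_sub, Derivation.leibniz, Derivation.leibniz_pow, pderiv_C, pderiv_X, pd_two, Pi.single_apply, smul_eq_mul, Fin.isValue, Fin.reduceEq, ite_true, ite_false, if_true, if_false, reduceIte, map_zero, mul_zero, zero_mul, add_zero, zero_add, sub_zero, mul_one, one_mul]
  norm_num
  try ring

lemma pdI0 : pderiv (0 : Fin 6) (Ipoly a1 c1 c2) = -2 * X 2 * X 5 * C a1 * C c2 - 2 * X 2 * X 3 * X 5 * C c2 ^ 2 - 2 * X 2 ^ 2 * X 5 * C c2 - 2 * X 1 * X 4 * C a1 * C c2 - 2 * X 1 * X 3 * C c1 - 2 * X 1 * X 3 * X 4 * C c2 ^ 2 - 2 * X 1 * X 2 * X 4 * C c2 + 2 * X 0 * C a1 ^ 2 - 2 * X 0 * X 3 ^ 2 * C c2 ^ 2 + 4 * X 0 * X 2 * C a1 + 2 * X 0 * X 2 ^ 2 := by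
  unfold Ipoly Jv xv
  simp only [ca0, ca1, ca2, na0, na1, na2, map_add, map_sub, Derivation.leibniz, Derivation.leibniz_pow, pderiv_C, pderiv_X, pd_two, Pi.single_apply, smul_eq_mul, Fin.isValue, Fin.reduceEq, ite_true, ite_false, if_true, if_false, reduceIte, map_zero, mul_zero, zero_mul, add_zero, zero_add, sub_zero, mul_one, one_mul]
  norm_num
  try ring

lemma pdI1 : pderiv (1 : Fin 6) (Ipoly a1 c1 c2) = 2 * X 5 * C a1 * C c1 + 2 * X 3 * X 5 * C c1 * C c2 + 2 * X 1 * C a1 ^ 2 - 4 * X 1 * X 4 * C c1 + 4 * X 1 * X 3 * C a1 * C c2 + 2 * X 1 * X 3 ^ 2 * C c2 ^ 2 + 4 * X 1 * X 2 * C a1 + 4 * X 1 * X 2 * X 3 * C c2 + 2 * X 1 * X 2 ^ 2 - 2 * X 0 * X 4 * C a1 * C c2 - 2 * X 0 * X 3 * C c1 - 2 * X 0 * X 3 * X 4 * C c2 ^ 2 - 2 * X 0 * X 2 * X 4 * C c2 := by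
  unfold Ipoly Jv xv
  simp only [ca0, ca1, ca2, na0, na1, na2, map_add, map_sub, Derivation.leibniz, Derivation.leibniz_pow, pderiv_C, pderiv_X, pd_two, Pi.single_apply, smul_eq_mul, Fin.isValue, Fin.reduceEq, ite_true, ite_false, if_true, if_false, reduceIte, map_zero, mul_zero, zero_mul, add_zero, zero_add, sub_zero, mul_one, one_mul]
  norm_num
  try ring

lemma pdI2 : pderiv (2 : Fin 6) (Ipoly a1 c1 c2) = -2 * X 4 * C a1 * C c1 - 2 * X 3 * X 4 * C c1 * C c2 + 2 * X 2 * C a1 ^ 2 - 4 * X 2 * X 4 * C c1 + 4 * X 2 * X 3 * C a1 * C c2 + 2 * X 2 * X 3 ^ 2 * C c2 ^ 2 + 6 * X 2 ^ 2 * C a1 + 6 * X 2 ^ 2 * X 3 * C c2 + 4 * X 2 ^ 3 + 2 * X 1 ^ 2 * C a1 + 2 * X 1 ^ 2 * X 3 * C c2 + 2 * X 1 ^ 2 * X 2 - 2 * X 0 * X 5 * C a1 * C c2 - 2 * X 0 * X 3 * X 5 * C c2 ^ 2 - 4 * X 0 * X 2 * X 5 * C c2 - 2 * X 0 * X 1 *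 X 4 * C c2 + 2 * X 0 ^ 2 * C a1 + 2 * X 0 ^ 2 * X 2 := by
  unfold Ipoly Jv xv
  simp only [ca0, ca1, ca2, na0, na1, na2, map_add, map_sub, Derivation.leibniz, Derivation.leibniz_pow, pderiv_C, pderiv_X, pd_two, Pi.single_apply, smul_eq_mul, Fin.isValue, Fin.reduceEq, ite_true, ite_false, if_true, if_false, reduceIte, map_zero, mul_zero, zero_mul, add_zero, zero_add, sub_zero, mul_one, one_mul]
  norm_num
  try ring

lemma pdI3 : pderiv (3 : Fin 6) (Ipoly a1 c1 c2) = -2 * X 2 * X 4 * C c1 * C c2 + 2 * X 2 ^ 2 * C a1 * C c2 + 2 * X 2 ^ 2 * X 3 * C c2 ^ 2 + 2 * X 2 ^ 3 * C c2 + 2 * X 1 * X 5 * C c1 * C c2 + 2 * X 1 ^ 2 * C a1 * C c2 + 2 * X 1 ^ 2 * X 3 * C c2 ^ 2 + 2 * X 1 ^ 2 * X 2 * C c2 - 2 * X 0 * X 2 * X 5 * C c2 ^ 2 - 2 * X 0 * X 1 * C c1 - 2 * X 0 * X 1 * X 4 * C c2 ^ 2 - 2 * X 0 ^ 2 * X 3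 * C c2 ^ 2 := by
  unfold Ipoly Jv xv
  simp only [ca0, ca1, ca2, na0, na1, na2, map_add, map_sub, Derivation.leibniz, Derivation.leibniz_pow, pderiv_C, pderiv_X, pd_two, Pi.single_apply, smul_eq_mul, Fin.isValue, Fin.reduceEq, ite_true, ite_false, if_true, if_false, reduceIte, map_zero, mul_zero, zero_mul, add_zero, zero_add, sub_zero, mul_one, one_mul]
  norm_num
  try ring

lemma pdI4 : pderiv (4 : Fin 6) (Ipoly a1 c1 c2) = 2 * X 4 * C c1 ^ 2 - 2 * X 2 * C a1 * C c1 - 2 * X 2 * X 3 * C c1 * C c2 - 2 * X 2 ^ 2 * C c1 - 2 * X 1 ^ 2 * C c1 - 2 * X 0 * X 1 * C a1 * C c2 - 2 * X 0 * X 1 * X 3 * C c2 ^ 2 - 2 * X 0 * X 1 * X 2 * C c2 := by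
  unfold Ipoly Jv xv
  simp only [ca0, ca1, ca2, na0, na1, na2, map_add, map_sub, Derivation.leibniz, Derivation.leibniz_pow, pderiv_C, pderiv_X, pd_two, Pi.single_apply, smul_eq_mul, Fin.isValue, Fin.reduceEq, ite_true, ite_false, if_true, if_false, reduceIte, map_zero, mul_zero, zero_mul, add_zero, zero_add, sub_zero, mul_one, one_mul]
  norm_num
  try ring

lemma pdI5 : pderiv (5 : Fin 6) (Ipoly a1 c1 c2) = 2 * X 5 * C c1 ^ 2 + 2 * X 1 * C a1 * C c1 + 2 * X 1 * X 3 * C c1 * C c2 - 2 * X 0 * X 2 * C a1 * C c2 - 2 * X 0 * X 2 * X 3 * C c2 ^ 2 - 2 * X 0 * X 2 ^ 2 * C c2 := by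
  unfold Ipoly Jv xv
  simp only [ca0, ca1, ca2, na0, na1, na2, map_add, map_sub, Derivation.leibniz, Derivation.leibniz_pow, pderiv_C, pderiv_X, pd_two, Pi.single_apply, smul_eq_mul, Fin.isValue, Fin.reduceEq, ite_true, ite_false, if_true, if_false, reduceIte, map_zero, mul_zero, zero_mul, add_zero, zero_add, sub_zero, mul_one, one_mul]
  norm_num
  try ring


set_option maxHeartbeats 4000000 in
/-- the generalized Kowalewski Hamiltonian `H` Poisson-commutes with the
quartic integral `I₄` with respect to the `e(3)` Lie–Poisson bracket: `{H, I₄} = 0`. -/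
theorem kowalewski_H_I4_commute (a1 c1 c2 : ℝ) :
    e3Bracket
      (Jv 0 ^ 2 + Jv 1 ^ 2 + 2 * Jv 2 ^ 2 - 2 * C c1 * xv 1 + 2 * C a1 * Jv 2
        + 2 * C c2 * (Jv 2 * xv 0 - xv 2 * Jv 0))
      (C c2 ^ 2 * xv 0 * (xv 0 * (Jv 1 ^ 2 + Jv 2 ^ 2 - Jv 0 ^ 2)
          - 2 * (xv 2 * Jv 2 + xv 1 * Jv 1) * Jv 0)
        + C c1 ^ 2 * (xv 1 ^ 2 + xv 2 ^ 2)
        + 2 * C c2 * (C c1 * xv 0 * (xv 2 * Jv 1 - xv 1 * Jv 2)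
          + (Jv 2 + C a1) * (xv 0 * (Jv 1 ^ 2 + Jv 2 ^ 2)
            - (xv 1 * Jv 1 + xv 2 * Jv 2) * Jv 0))
        - 2 * C c1 * (xv 1 * (Jv 1 ^ 2 + Jv 2 ^ 2 + C a1 * Jv 2)
          + (xv 0 * Jv 0 - C a1 * xv 2) * Jv 1)
        + (Jv 0 ^ 2 + Jv 1 ^ 2 + Jv 2 ^ 2) * (Jv 2 + C a1) ^ 2) = 0 := by
  show e3Bracket (Hpoly a1 c1 c2) (Ipoly a1 c1 c2) = 0
  simp only [e3Bracket, eps, Fin.sum_univ_three, Fin.isValue, Fin.reduceEq,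
    ca0, ca1, ca2, na0, na1, na2, Jv, xv,
    and_true, and_false, true_and, false_and, or_false, false_or, or_self,
    ite_true, ite_false, map_zero, zero_mul, mul_zero, add_zero, zero_add, map_one, map_neg, one_mul,
    ]
  rw [pdH0, pdH1, pdH2, pdH3, pdH4, pdH5, pdI0, pdI1, pdI2, pdI3, pdI4, pdI5]
  ring

end
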